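/- Let N ≥ 0 be an integer. Assume τ(λ) = T(λ² + λ^{−2}) for some polynomial T ∈ ℂ[X] with deg T ≤ N+2, and a(λ) = x(λ)/(λ² − λ^{−2}) for λ⁴ ≠ 1, where x(λ) = Σ_{j=−(N+2)}^{N+2} c_j λ^{2j} is an even Laurent polynomial of degree at most 2N+4 (c_j ∈ ℂ). Then there exists a polynomial P ∈ ℂ[X] with deg P ≤ N+2 such that det D_τ(λ) = P(λ^{2p} + λ^{−2p}) for every λ ∈ ℂ∖{0} satisfying (q^kλ)⁴ ≠ 1 for all k ∈ {0,…,p−1}. -/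

import Mathlib

open Polynomial Finset

/-- mirror of a polynomial with respect to degree `d`. -/
noncomputable def mir (d : ℕ) (R : ℂ[X]) : ℂ[X] :=
  ∑ n ∈ Finset.range (d + 1), C (R.coeff (d - n)) * X ^ n

lemma mir_coeff (d n : ℕ) (R : ℂ[X]) (hn : n ≤ d) : (mir d R).coeff n = R.coeff (d - n) := by
  rw [mir, finset_sum_coeff]
  rw [Finset.sum_eq_single n]
  · simp
  · intro b _ hb; simp [coeff_C_mul, coeff_X_pow, Ne.symm hb]
  · intro h; exact absurd (Finset.mem_range.2 (by omega)) h

lemma mir_eval (d : ℕ) (R : ℂ[X]) (hR : R.natDegree ≤ d) (w : ℂ) (hw : w ≠ 0) :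
    (mir d R).eval w = w ^ d * R.eval w⁻¹ := by
  rw [mir]
  rw [eval_finset_sum]
  rw [R.eval_eq_sum_range' (lt_of_le_of_lt hR (Nat.lt_succ_self d))]
  rw [Finset.mul_sum]
  rw [← Finset.sum_range_reflect]
  apply Finset.sum_congr rfl
  intro n hn
  rw [Finset.mem_range] at hn
  have h1 : d + 1 - 1 - n = d - n := by omega
  rw [h1]
  have h2 : d - (d - n) = n := by omega
  rw [h2]
  simp only [eval_mul, eval_C, eval_pow, eval_X]
  have : w ^ d = w ^ (d - n) * w ^ n := by rw [← pow_add]; congr 1; omega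
  rw [this, inv_pow]
  field_simp

lemma mir_eq (d : ℕ) (R : ℂ[X]) (hR : R.natDegree ≤ d) (S : Set ℂ) (hS : S.Infinite)
    (h0 : ∀ w ∈ S, w ≠ 0) (h : ∀ w ∈ S, R.eval w = w ^ d * R.eval w⁻¹) :
    mir d R = R := by
  apply Polynomial.eq_of_infinite_eval_eq
  apply Set.Infinite.mono _ hS
  intro w hw
  simp only [Set.mem_setOf_eq]
  rw [mir_eval d R hR w (h0 w hw), ← h w hw]

lemma nonzero_infinite : ({w : ℂ | w ≠ 0}).Infinite := by
  have h : ({w : ℂ | w ≠ 0}) = ({(0:ℂ)} : Set ℂ)ᶜ := by ext w; simp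
  rw [h]; exact (Set.finite_singleton (0:ℂ)).infinite_compl

lemma pal : ∀ (m : ℕ) (R : ℂ[X]), R.natDegree ≤ 2 * m →
    (∀ w : ℂ, w ≠ 0 → R.eval w = w ^ (2 * m) * R.eval w⁻¹) →
    ∃ P : ℂ[X], P.natDegree ≤ m ∧ ∀ w : ℂ, w ≠ 0 → R.eval w = w ^ m * P.eval (w + w⁻¹) := by
  intro m
  induction m using Nat.strong_induction_on with
  | _ m IH =>
  match m with
  | 0 =>
    intro R hdeg _
    refine ⟨R, by simpa using hdeg, fun w hw => ?_⟩
    rw [Polynomial.eq_C_of_natDegree_le_zero (p := R) (by simpa using hdeg)]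
    simp
  | (M+1) =>
    intro R hdeg hsym
    set a : ℂ := R.coeff (2*(M+1)) with ha
    set G₁ : ℂ[X] := (X^2+1)^(M+1) with hG₁def
    set G₂ : ℂ[X] := X*(X^2+1)^M with hG₂def
    have hmono : (X^2+1 : ℂ[X]).Monic := by
      have := Polynomial.monic_X_pow_add_C (R := ℂ) 1 (n := 2) (by norm_num)
      simpa using this
    have hndeg : (X^2+1 : ℂ[X]).natDegree = 2 := by
      simpa using Polynomial.natDegree_X_pow_add_C (n := 2) (r := (1:ℂ))
    have hG₁monic : G₁.Monic := hmono.pow _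
    have hG₁deg : G₁.natDegree = 2*(M+1) := by
      rw [hG₁def, Polynomial.natDegree_pow, hndeg]; ring
    have hG₂deg : G₂.natDegree = 2*M+1 := by
      rw [hG₂def, Polynomial.natDegree_mul Polynomial.X_ne_zero (pow_ne_zero _ hmono.ne_zero),
        Polynomial.natDegree_pow, hndeg, Polynomial.natDegree_X]; ring
    have hG₂monic : G₂.Monic := (Polynomial.monic_X).mul (hmono.pow _)
    -- eval facts
    have hwkey : ∀ w : ℂ, w ≠ 0 → w * (w + w⁻¹) = w^2 + 1 := by
      intro w hw; field_simp
    have hG₁sym : ∀ w : ℂ, w ≠ 0 → w^(2*(M+1)) * G₁.eval w⁻¹ = G₁.eval w := by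
      intro w hw
      simp only [hG₁def, eval_pow, eval_add, eval_one, eval_X]
      rw [pow_mul, ← mul_pow]
      congr 1
      field_simp
      ring
    have hG₂sym : ∀ w : ℂ, w ≠ 0 → w^(2*(M+1)) * G₂.eval w⁻¹ = G₂.eval w := by
      intro w hw
      simp only [hG₂def, eval_mul, eval_pow, eval_add, eval_one, eval_X]
      have h1 : w^(2*(M+1)) = w^2 * (w^2)^M := by rw [← pow_mul, ← pow_add]; ring_nf
      rw [h1]
      have h2 : (w⁻¹)^2 + 1 = (w^2)⁻¹ * (1 + w^2) := by field_simp
      rw [h2, mul_pow]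
      field_simp
      ring_nf
      rw [← mul_pow, mul_inv_cancel₀ hw, one_pow, one_mul]
    set R' : ℂ[X] := R - C a * G₁ with hR'def
    set b : ℂ := R'.coeff (2*M+1) with hb
    set R₁ : ℂ[X] := R' - C b * G₂ with hR₁def
    have hR₁eval : ∀ w : ℂ, R₁.eval w = R.eval w - a * G₁.eval w - b * G₂.eval w := by
      intro w; simp [hR₁def, hR'def]
    have hcofftop : R₁.coeff (2*(M+1)) = 0 := by
      have h2 : (C b * G₂).coeff (2*(M+1)) = 0 := by
        apply Polynomial.coeff_eq_zero_of_natDegree_lt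
        calc (C b * G₂).natDegree ≤ 0 + (2*M+1) := by
              refine le_trans (Polynomial.natDegree_mul_le) ?_
              simp [hG₂deg]
          _ < 2*(M+1) := by omega
      have h1 : (C a * G₁).coeff (2*(M+1)) = a := by
        rw [Polynomial.coeff_C_mul, ← hG₁deg, hG₁monic.coeff_natDegree, mul_one]
      simp [hR₁def, hR'def, Polynomial.coeff_sub, h1, h2]; exact sub_eq_zero.mpr ha.symm
    have hcoff1 : R₁.coeff (2*M+1) = 0 := by
      have h2 : (C b * G₂).coeff (2*M+1) = b := by
        rw [Polynomial.coeff_C_mul, ← hG₂deg, hG₂monic.coeff_natDegree, mul_one]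
      simp [hR₁def, Polynomial.coeff_sub, h2, ← hb]
    have hdeg₁ : R₁.natDegree ≤ 2*(M+1) := by
      refine le_trans (Polynomial.natDegree_sub_le _ _) ?_
      rw [max_le_iff]
      constructor
      · refine le_trans (Polynomial.natDegree_sub_le _ _) ?_
        rw [max_le_iff]
        refine ⟨hdeg, le_trans (Polynomial.natDegree_mul_le) ?_⟩
        simp [hG₁deg]
      · refine le_trans (Polynomial.natDegree_mul_le) ?_
        simp [hG₂deg]
    have hsym₁ : ∀ w : ℂ, w ≠ 0 → R₁.eval w = w ^ (2*(M+1)) * R₁.eval w⁻¹ := by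
      intro w hw
      rw [hR₁eval, hR₁eval, hsym w hw]
      rw [mul_sub, mul_sub, mul_comm (w ^ (2*(M+1))) (a * G₁.eval w⁻¹),
        mul_assoc a, mul_comm (G₁.eval w⁻¹), hG₁sym w hw,
        mul_comm (w ^ (2*(M+1))) (b * G₂.eval w⁻¹), mul_assoc b,
        mul_comm (G₂.eval w⁻¹), hG₂sym w hw]
    have hmir : mir (2*(M+1)) R₁ = R₁ := by
      apply mir_eq _ _ hdeg₁ {w : ℂ | w ≠ 0} nonzero_infinite (fun w hw => hw)
      intro w hw
      exact hsym₁ w hw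
    have hc0 : R₁.coeff 0 = 0 := by
      rw [← hmir, mir_coeff _ _ _ (by omega)]
      simpa using hcofftop
    have hc1 : R₁.coeff 1 = 0 := by
      rw [← hmir, mir_coeff _ _ _ (by omega)]
      have : 2*(M+1) - 1 = 2*M+1 := by omega
      rw [this]; exact hcoff1
    have hdvd : (X:ℂ[X])^2 ∣ R₁ := by
      rw [Polynomial.X_pow_dvd_iff]
      intro d hd
      interval_cases d
      · exact hc0
      · exact hc1
    obtain ⟨R₂, hR₂⟩ := hdvd
    by_cases hR₂0 : R₂ = 0
    · -- R₁ = 0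
      have hR₁0 : R₁ = 0 := by rw [hR₂, hR₂0, mul_zero]
      refine ⟨C a * X^(M+1) + C b * X^M, ?_, ?_⟩
      · refine le_trans (Polynomial.natDegree_add_le _ _) ?_
        rw [max_le_iff]
        constructor
        · refine le_trans (Polynomial.natDegree_mul_le) ?_; simp
        · exact le_trans (Polynomial.natDegree_mul_le)
            (show _ ≤ M+1 by rw [Polynomial.natDegree_C, Polynomial.natDegree_X_pow]; omega)
      · intro w hw
        have h0 : R.eval w = a * G₁.eval w + b * G₂.eval w := by
          have := hR₁eval w; rw [hR₁0] at this; simp at this; linear_combination -this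
        rw [h0]
        simp only [eval_add, eval_mul, eval_pow, eval_C, eval_X, hG₁def, hG₂def, eval_one]
        rw [show w^2+1 = w * (w+w⁻¹) from (hwkey w hw).symm]
        rw [mul_pow, mul_pow]
        ring
    · have hdegR₁' : R₁.natDegree ≤ 2*M := by
        rw [Polynomial.natDegree_le_iff_coeff_eq_zero]
        intro n hn
        rcases Nat.lt_or_ge n (2*M+1) with h | h
        · omega
        · rcases Nat.eq_or_lt_of_le h with h' | h'
          · rw [← h']; exact hcoff1
          · rcases Nat.eq_or_lt_of_le h' with h'' | h''
            · rw [← h'']; exact hcofftop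
            · exact Polynomial.coeff_eq_zero_of_natDegree_lt (by omega)
      have hdegmul : R₁.natDegree = 2 + R₂.natDegree := by
        rw [hR₂, Polynomial.natDegree_mul (pow_ne_zero _ Polynomial.X_ne_zero) hR₂0]
        simp
      have hM1 : 1 ≤ M := by omega
      have hdegR₂ : R₂.natDegree ≤ 2*(M-1) := by omega
      have hsymR₂ : ∀ w : ℂ, w ≠ 0 → R₂.eval w = w ^ (2*(M-1)) * R₂.eval w⁻¹ := by
        intro w hw
        have h1 := hsym₁ w hw
        rw [hR₂] at h1
        simp only [eval_mul, eval_pow, eval_X] at h1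
        have hw2 : w^2 ≠ 0 := pow_ne_zero _ hw
        apply mul_left_cancel₀ hw2
        rw [h1]
        have : (w⁻¹)^2 = (w^2)⁻¹ := by rw [inv_pow]
        rw [this]
        have hexp : w ^ (2*(M+1)) = w^2 * w^2 * w^(2*(M-1)) := by
          rw [← pow_add, ← pow_add]; congr 1; omega
        rw [hexp]
        field_simp
      obtain ⟨P₂, hP₂deg, hP₂⟩ := IH (M-1) (by omega) R₂ hdegR₂ hsymR₂
      refine ⟨C a * X^(M+1) + C b * X^M + P₂, ?_, ?_⟩
      · refine le_trans (Polynomial.natDegree_add_le _ _) ?_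
        rw [max_le_iff]
        constructor
        · refine le_trans (Polynomial.natDegree_add_le _ _) ?_
          rw [max_le_iff]
          constructor
          · refine le_trans (Polynomial.natDegree_mul_le) ?_; simp
          · exact le_trans (Polynomial.natDegree_mul_le)
              (by rw [Polynomial.natDegree_C, Polynomial.natDegree_X_pow]; omega)
        · omega
      · intro w hw
        have h0 : R.eval w = a * G₁.eval w + b * G₂.eval w + R₁.eval w := by
          have := hR₁eval w; linear_combination -this
        rw [h0, hR₂]
        simp only [eval_add, eval_mul, eval_pow, eval_C, eval_X, hG₁def, hG₂def, eval_one]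
        rw [hP₂ w hw]
        rw [show w^2+1 = w * (w+w⁻¹) from (hwkey w hw).symm]
        rw [mul_pow, mul_pow]
        have hexp2 : w^2 * w^(M-1) = w^(M+1) := by rw [← pow_add]; congr 1; omega
        have : w^2 * (w^(M-1) * P₂.eval (w+w⁻¹)) = w^(M+1) * P₂.eval (w+w⁻¹) := by
          rw [← mul_assoc, hexp2]
        rw [this]
        ring

noncomputable def xxf (N : ℕ) (c : ℤ → ℂ) (z : ℂ) : ℂ :=
  ∑ j ∈ Finset.Icc (-(N + 2 : ℤ)) (N + 2 : ℤ), c j * z ^ j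

noncomputable def dgf (T : ℂ[X]) (z : ℂ) : ℂ := (z - z⁻¹) * T.eval (z + z⁻¹)

noncomputable def uu (p : ℕ) (q : ℂ) (k : ZMod p) (z : ℂ) : ℂ := q ^ (2 * k.val) * z

noncomputable def Mmat (p : ℕ) (q : ℂ) (T : Polynomial ℂ) (N : ℕ) (c : ℤ → ℂ) (z : ℂ) :
    Matrix (ZMod p) (ZMod p) ℂ :=
  Matrix.of fun k l =>
    if l = k then dgf T (uu p q k z)
    else if l = k - 1 then -xxf N c (uu p q k z)
    else if l = k + 1 then xxf N c (uu p q k z)⁻¹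
    else 0

lemma dgf_inv (T : Polynomial ℂ) (v : ℂ) : dgf T v⁻¹ = -dgf T v := by
  unfold dgf; rw [inv_inv]; ring_nf

lemma qpow_val_mod (p : ℕ) (q : ℂ) (hq : q ^ p = 1) (a : ℕ) :
    q ^ (2 * (a % p)) = q ^ (2 * a) := by
  conv_rhs => rw [← Nat.div_add_mod a p]
  rw [show 2 * (p * (a / p) + a % p) = p * (2 * (a / p)) + 2 * (a % p) by ring]
  rw [pow_add, pow_mul q p, hq, one_pow, one_mul]

lemma uu_succ (p : ℕ) [NeZero p] (q : ℂ) (hq : q ^ p = 1) (hp1 : 1 < p) (k : ZMod p) (z : ℂ) :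
    uu p q (k + 1) z = uu p q k (q ^ 2 * z) := by
  haveI : Fact (1 < p) := ⟨hp1⟩
  unfold uu
  rw [ZMod.val_add, ZMod.val_one, qpow_val_mod p q hq]
  rw [show 2 * (k.val + 1) = 2 * k.val + 2 by ring, pow_add]
  ring

lemma uu_neg_inv (p : ℕ) [NeZero p] (q : ℂ) (hq : q ^ p = 1) (k : ZMod p) (z : ℂ) :
    uu p q (-k) z⁻¹ = (uu p q k z)⁻¹ := by
  have h1 : q ^ (2 * (-k).val) * q ^ (2 * k.val) = 1 := by
    rw [← pow_add, show 2 * (-k).val + 2 * k.val = 2 * ((-k).val + k.val) by ring,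
      ← qpow_val_mod p q hq, ← ZMod.val_add, neg_add_cancel, ZMod.val_zero, mul_zero, pow_zero]
  unfold uu
  rw [mul_inv]
  congr 1
  exact eq_inv_of_mul_eq_one_left h1

lemma uu_inv_eq (p : ℕ) [NeZero p] (q : ℂ) (hq : q ^ p = 1) (k : ZMod p) (z : ℂ) :
    uu p q k z⁻¹ = (uu p q (-k) z)⁻¹ := by
  have := uu_neg_inv p q hq (-k) z
  rwa [neg_neg] at this

lemma Mmat_shift (p : ℕ) [NeZero p] (q : ℂ) (T : Polynomial ℂ) (N : ℕ) (c : ℤ → ℂ)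
    (hq : q ^ p = 1) (hp1 : 1 < p) (z : ℂ) :
    Mmat p q T N c (q ^ 2 * z) =
      (Mmat p q T N c z).submatrix (Equiv.addRight (1 : ZMod p)) (Equiv.addRight 1) := by
  ext k l
  simp only [Mmat, Matrix.submatrix_apply, Matrix.of_apply, Equiv.coe_addRight]
  have e1 : (l + 1 = k + 1) ↔ (l = k) := add_left_inj 1
  have e2 : (l + 1 = (k + 1) - 1) ↔ (l = k - 1) := by
    rw [add_sub_cancel_right]
    constructor
    · intro h; rw [← h]; ring
    · intro h; rw [h]; ring
  have e3 : (l + 1 = (k + 1) + 1) ↔ (l = k + 1) := add_left_inj 1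
  simp only [e1, e2, e3, uu_succ p q hq hp1]

lemma Mmat_invz (p : ℕ) [NeZero p] (q : ℂ) (T : Polynomial ℂ) (N : ℕ) (c : ℤ → ℂ)
    (hq : q ^ p = 1) (h2 : (2 : ZMod p) ≠ 0) (z : ℂ) :
    Mmat p q T N c z⁻¹ =
      -(Mmat p q T N c z).submatrix (Equiv.neg (ZMod p)) (Equiv.neg (ZMod p)) := by
  ext k l
  simp only [Mmat, Matrix.submatrix_apply, Matrix.of_apply, Equiv.neg_apply, Matrix.neg_apply]
  have huu : uu p q k z⁻¹ = (uu p q (-k) z)⁻¹ := uu_inv_eq p q hq k z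
  have c1 : (-l = -k) ↔ (l = k) := neg_inj
  have c2 : (-l = -k - 1) ↔ (l = k + 1) := by
    constructor
    · intro h; linear_combination -h
    · intro h; linear_combination -h
  have c3 : (-l = -k + 1) ↔ (l = k - 1) := by
    constructor
    · intro h; linear_combination -h
    · intro h; linear_combination -h
  simp only [c1, c2, c3]
  have hd : l = k - 1 → l ≠ k + 1 := by
    intro h h'
    rw [h] at h'
    exact h2 (by linear_combination -h')
  by_cases h1 : l = k
  · rw [if_pos h1, if_pos h1, huu, dgf_inv]
  · rw [if_neg h1, if_neg h1]
    by_cases hs : l = k - 1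
    · rw [if_pos hs, if_neg (hd hs), if_pos hs, huu]
    · rw [if_neg hs]
      by_cases hs' : l = k + 1
      · rw [if_pos hs', if_pos hs', huu, inv_inv, neg_neg]
      · rw [if_neg hs', if_neg hs', if_neg hs, neg_zero]

lemma Mmat_det_shift (p : ℕ) [NeZero p] (q : ℂ) (T : Polynomial ℂ) (N : ℕ) (c : ℤ → ℂ)
    (hq : q ^ p = 1) (hp1 : 1 < p) (z : ℂ) :
    (Mmat p q T N c (q ^ 2 * z)).det = (Mmat p q T N c z).det := by
  rw [Mmat_shift p q T N c hq hp1 z]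
  exact Matrix.det_submatrix_equiv_self _ _

lemma Mmat_det_shift_pow (p : ℕ) [NeZero p] (q : ℂ) (T : Polynomial ℂ) (N : ℕ) (c : ℤ → ℂ)
    (hq : q ^ p = 1) (hp1 : 1 < p) (s : ℕ) (z : ℂ) :
    (Mmat p q T N c ((q ^ 2) ^ s * z)).det = (Mmat p q T N c z).det := by
  induction s with
  | zero => simp
  | succ n ih =>
    have : (q ^ 2) ^ (n + 1) * z = q ^ 2 * ((q ^ 2) ^ n * z) := by ring
    rw [this, Mmat_det_shift p q T N c hq hp1, ih]

lemma Mmat_det_invz (p : ℕ) [NeZero p] (q : ℂ) (T : Polynomial ℂ) (N : ℕ) (c : ℤ → ℂ)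
    (hq : q ^ p = 1) (hodd : Odd p) (h2 : (2 : ZMod p) ≠ 0) (z : ℂ) :
    (Mmat p q T N c z⁻¹).det = -(Mmat p q T N c z).det := by
  rw [Mmat_invz p q T N c hq h2 z, Matrix.det_neg,
    Matrix.det_submatrix_equiv_self, ZMod.card, Odd.neg_one_pow hodd, neg_one_mul]

lemma Mdet_root_zero (p : ℕ) [NeZero p] (q : ℂ) (T : Polynomial ℂ) (N : ℕ) (c : ℤ → ℂ)
    (hq : IsPrimitiveRoot q p) (hodd : Odd p) (hp1 : 1 < p) (h2 : (2 : ZMod p) ≠ 0)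
    (z : ℂ) (hz : z ^ (2 * p) = 1) :
    (Mmat p q T N c z).det = 0 := by
  have hq1 : q ^ p = 1 := hq.pow_eq_one
  have hz0 : z ≠ 0 := by
    intro h
    rw [h, zero_pow (show 2 * p ≠ 0 by have := NeZero.ne p; omega)] at hz
    exact zero_ne_one hz
  have hzp : (z ^ 2) ^ p = 1 := by rw [← pow_mul]; exact hz
  obtain ⟨i, hip, hqi⟩ := hq.eq_pow_of_pow_eq_one hzp
  set t := i * ((p + 1) / 2) with ht
  have hq2t : q ^ (2 * t) = z ^ 2 := by
    have hpo : 2 * ((p + 1) / 2) = p + 1 := by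
      obtain ⟨m, hm⟩ := hodd; omega
    have h1 : 2 * t = i * p + i := by
      calc 2 * t = i * (2 * ((p + 1) / 2)) := by rw [ht]; ring
        _ = i * (p + 1) := by rw [hpo]
        _ = i * p + i := by ring
    rw [h1, pow_add, mul_comm i p, pow_mul q p i, hq1, one_pow, one_mul, hqi]
  have key : (q ^ 2) ^ (t * (p - 1)) * z = z⁻¹ := by
    have h1 : (q ^ 2) ^ (t * (p - 1)) = (q ^ (2 * t)) ^ (p - 1) := by
      rw [← pow_mul, ← pow_mul]; ring_nf
    have hmul : ((q ^ 2) ^ (t * (p - 1)) * z) * z = 1 := by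
      rw [h1, hq2t, ← pow_mul, mul_assoc, ← pow_two, ← pow_add,
        show 2 * (p - 1) + 2 = 2 * p by omega, hz]
    exact eq_inv_of_mul_eq_one_left hmul
  have e1 := Mmat_det_shift_pow p q T N c hq1 hp1 (t * (p - 1)) z
  rw [key] at e1
  have e2 := Mmat_det_invz p q T N c hq1 hodd h2 z
  rw [e1] at e2
  linear_combination e2 / 2

noncomputable def Qdiag (p : ℕ) (q : ℂ) (T : Polynomial ℂ) (N : ℕ) (k : ZMod p) : Polynomial ℂ :=
  (C (q ^ (2 * k.val)) * X ^ 2 - C ((q ^ (2 * k.val))⁻¹)) *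
    ∑ i ∈ Finset.range (N + 3),
      C (T.coeff i) * (C (q ^ (2 * k.val)) * X ^ 2 + C ((q ^ (2 * k.val))⁻¹)) ^ i * X ^ (N + 2 - i)

noncomputable def Qsub (p : ℕ) (q : ℂ) (N : ℕ) (c : ℤ → ℂ) (k : ZMod p) : Polynomial ℂ :=
  -∑ j ∈ Finset.Icc (-(N + 2 : ℤ)) (N + 2 : ℤ),
      C (c j * ((q : ℂ) ^ (2 * k.val)) ^ j) * X ^ (j + (N + 3 : ℤ)).toNat

noncomputable def Qsup (p : ℕ) (q : ℂ) (N : ℕ) (c : ℤ → ℂ) (k : ZMod p) : Polynomial ℂ :=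
  ∑ j ∈ Finset.Icc (-(N + 2 : ℤ)) (N + 2 : ℤ),
      C (c j * ((q : ℂ) ^ (2 * k.val)) ^ (-j)) * X ^ ((N + 3 : ℤ) - j).toNat

noncomputable def Qmat (p : ℕ) (q : ℂ) (T : Polynomial ℂ) (N : ℕ) (c : ℤ → ℂ) :
    Matrix (ZMod p) (ZMod p) (Polynomial ℂ) :=
  Matrix.of fun k l =>
    if l = k then Qdiag p q T N k
    else if l = k - 1 then Qsub p q N c k
    else if l = k + 1 then Qsup p q N c k
    else 0

lemma Qdiag_eval (p : ℕ) (q : ℂ) (T : Polynomial ℂ) (N : ℕ) (k : ZMod p)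
    (hT : T.natDegree ≤ N + 2) (hq0 : q ≠ 0) (z : ℂ) (hz : z ≠ 0) :
    (Qdiag p q T N k).eval z = z ^ (N + 3) * dgf T (uu p q k z) := by
  rw [Qdiag, eval_mul, eval_finset_sum]
  set a : ℂ := q ^ (2 * k.val) with ha
  have ha0 : a ≠ 0 := pow_ne_zero _ hq0
  have hu : uu p q k z = a * z := rfl
  have hsum : (uu p q k z + (uu p q k z)⁻¹) * z = a * z ^ 2 + a⁻¹ := by
    rw [hu]; field_simp
  have hdiff : z * (uu p q k z - (uu p q k z)⁻¹) = a * z ^ 2 - a⁻¹ := by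
    rw [hu]; field_simp
  have hT' : T.eval (uu p q k z + (uu p q k z)⁻¹) =
      ∑ i ∈ Finset.range (N + 3), T.coeff i * (uu p q k z + (uu p q k z)⁻¹) ^ i :=
    Polynomial.eval_eq_sum_range' (show T.natDegree < N + 3 by omega) _
  have hsum2 : ∑ i ∈ Finset.range (N + 3),
      eval z (C (T.coeff i) * (C a * X ^ 2 + C a⁻¹) ^ i * X ^ (N + 2 - i)) =
      z ^ (N + 2) * T.eval (uu p q k z + (uu p q k z)⁻¹) := by
    rw [hT', Finset.mul_sum]
    apply Finset.sum_congr rfl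
    intro i hi
    rw [Finset.mem_range] at hi
    simp only [eval_mul, eval_pow, eval_add, eval_C, eval_X]
    rw [← hsum, mul_pow]
    have hzz : z ^ (N + 2) = z ^ i * z ^ (N + 2 - i) := by rw [← pow_add]; congr 1; omega
    rw [hzz]
    ring
  rw [hsum2]
  simp only [eval_sub, eval_mul, eval_pow, eval_C, eval_X]
  rw [← hdiff, dgf]
  ring

lemma Qsub_eval (p : ℕ) (q : ℂ) (N : ℕ) (c : ℤ → ℂ) (k : ZMod p)
    (hq0 : q ≠ 0) (z : ℂ) (hz : z ≠ 0) :
    (Qsub p q N c k).eval z = z ^ (N + 3) * (-xxf N c (uu p q k z)) := by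
  rw [Qsub, xxf, eval_neg, eval_finset_sum, mul_neg, neg_inj, Finset.mul_sum]
  set a : ℂ := q ^ (2 * k.val) with ha
  have ha0 : a ≠ 0 := pow_ne_zero _ hq0
  apply Finset.sum_congr rfl
  intro j hj
  rw [Finset.mem_Icc] at hj
  simp only [eval_mul, eval_pow, eval_C, eval_X]
  have hu : uu p q k z = a * z := rfl
  rw [hu, mul_zpow]
  have h1 : z ^ (j + (N + 3 : ℤ)).toNat = z ^ (j + (N + 3 : ℤ)) := by
    rw [← zpow_natCast, Int.toNat_of_nonneg (by omega)]
  have hcast : ((N : ℤ) + 3) = ((N + 3 : ℕ) : ℤ) := by push_cast; ring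
  rw [h1, zpow_add₀ hz, hcast, zpow_natCast]
  ring

lemma Qsup_eval (p : ℕ) (q : ℂ) (N : ℕ) (c : ℤ → ℂ) (k : ZMod p)
    (hq0 : q ≠ 0) (z : ℂ) (hz : z ≠ 0) :
    (Qsup p q N c k).eval z = z ^ (N + 3) * xxf N c (uu p q k z)⁻¹ := by
  rw [Qsup, xxf, eval_finset_sum, Finset.mul_sum]
  set a : ℂ := q ^ (2 * k.val) with ha
  have ha0 : a ≠ 0 := pow_ne_zero _ hq0
  apply Finset.sum_congr rfl
  intro j hj
  rw [Finset.mem_Icc] at hj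
  simp only [eval_mul, eval_pow, eval_C, eval_X]
  have hu : (uu p q k z)⁻¹ = a⁻¹ * z⁻¹ := by rw [show uu p q k z = a * z from rfl, mul_inv]
  rw [hu, mul_zpow]
  have h2 : (a⁻¹ : ℂ) ^ j = a ^ (-j) := by rw [inv_zpow, zpow_neg]
  have h3 : (z⁻¹ : ℂ) ^ j = z ^ (-j) := by rw [inv_zpow, zpow_neg]
  have h1 : z ^ ((N + 3 : ℤ) - j).toNat = z ^ ((N + 3 : ℤ) - j) := by
    rw [← zpow_natCast, Int.toNat_of_nonneg (by omega)]
  have hcast : ((N : ℤ) + 3) = ((N + 3 : ℕ) : ℤ) := by push_cast; ring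
  rw [h2, h3, h1, sub_eq_add_neg, zpow_add₀ hz, hcast, zpow_natCast]
  ring

lemma Qmat_map_eval (p : ℕ) (q : ℂ) (T : Polynomial ℂ) (N : ℕ) (c : ℤ → ℂ)
    (hT : T.natDegree ≤ N + 2) (hq0 : q ≠ 0) (z : ℂ) (hz : z ≠ 0) :
    (Qmat p q T N c).map (Polynomial.eval z) = (z ^ (N + 3)) • Mmat p q T N c z := by
  ext k l
  simp only [Qmat, Mmat, Matrix.map_apply, Matrix.of_apply, Matrix.smul_apply, smul_eq_mul]
  by_cases h1 : l = k
  · rw [if_pos h1, if_pos h1, Qdiag_eval p q T N k hT hq0 z hz]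
  · rw [if_neg h1, if_neg h1]
    by_cases h2 : l = k - 1
    · rw [if_pos h2, if_pos h2, Qsub_eval p q N c k hq0 z hz]
    · rw [if_neg h2, if_neg h2]
      by_cases h3 : l = k + 1
      · rw [if_pos h3, if_pos h3, Qsup_eval p q N c k hq0 z hz]
      · rw [if_neg h3, if_neg h3, eval_zero, mul_zero]

lemma Qdet_eval (p : ℕ) [NeZero p] (q : ℂ) (T : Polynomial ℂ) (N : ℕ) (c : ℤ → ℂ)
    (hT : T.natDegree ≤ N + 2) (hq0 : q ≠ 0) (z : ℂ) (hz : z ≠ 0) :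
    ((Qmat p q T N c).det).eval z = (z ^ (N + 3)) ^ p * (Mmat p q T N c z).det := by
  have h := RingHom.map_det (Polynomial.evalRingHom z) (Qmat p q T N c)
  simp only [RingHom.mapMatrix_apply, Polynomial.coe_evalRingHom] at h
  rw [h, Qmat_map_eval p q T N c hT hq0 z hz, Matrix.det_smul, ZMod.card]

lemma Qmat_deg (p : ℕ) (q : ℂ) (T : Polynomial ℂ) (N : ℕ) (c : ℤ → ℂ) (k l : ZMod p) :
    (Qmat p q T N c k l).natDegree ≤ 2 * N + 6 := by
  have hdiag : (Qdiag p q T N k).natDegree ≤ 2 * N + 6 := by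
    rw [Qdiag]
    refine le_trans (Polynomial.natDegree_mul_le) ?_
    have h1 : (C (q ^ (2 * k.val)) * X ^ 2 - C ((q ^ (2 * k.val))⁻¹)).natDegree ≤ 2 := by
      refine le_trans (Polynomial.natDegree_sub_le _ _) ?_
      rw [max_le_iff]
      exact ⟨Polynomial.natDegree_C_mul_le _ _ |>.trans (by simp),
        by simp [Polynomial.natDegree_C]⟩
    have h2 : (∑ i ∈ Finset.range (N + 3), C (T.coeff i) *
        (C (q ^ (2 * k.val)) * X ^ 2 + C ((q ^ (2 * k.val))⁻¹)) ^ i *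
        X ^ (N + 2 - i)).natDegree ≤ 2 * N + 4 := by
      apply Polynomial.natDegree_sum_le_of_forall_le
      intro i hi
      rw [Finset.mem_range] at hi
      refine le_trans (Polynomial.natDegree_mul_le) ?_
      have h3 : (C (T.coeff i) *
          (C (q ^ (2 * k.val)) * X ^ 2 + C ((q ^ (2 * k.val))⁻¹)) ^ i).natDegree ≤ 2 * i := by
        refine le_trans (Polynomial.natDegree_mul_le) ?_
        rw [Polynomial.natDegree_C, zero_add]
        refine le_trans (Polynomial.natDegree_pow_le) ?_
        have : (C (q ^ (2 * k.val)) * X ^ 2 + C ((q ^ (2 * k.val))⁻¹)).natDegree ≤ 2 := by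
          refine le_trans (Polynomial.natDegree_add_le _ _) ?_
          rw [max_le_iff]
          exact ⟨Polynomial.natDegree_C_mul_le _ _ |>.trans (by simp),
            by simp [Polynomial.natDegree_C]⟩
        calc i * (C (q ^ (2 * k.val)) * X ^ 2 + C ((q ^ (2 * k.val))⁻¹)).natDegree
            ≤ i * 2 := Nat.mul_le_mul_left i this
          _ = 2 * i := by ring
      rw [Polynomial.natDegree_X_pow]
      omega
    omega
  have hsub : (Qsub p q N c k).natDegree ≤ 2 * N + 6 := by
    rw [Qsub, Polynomial.natDegree_neg]
    apply Polynomial.natDegree_sum_le_of_forall_le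
    intro j hj
    rw [Finset.mem_Icc] at hj
    refine le_trans (Polynomial.natDegree_mul_le) ?_
    rw [Polynomial.natDegree_C, zero_add, Polynomial.natDegree_X_pow]
    omega
  have hsup : (Qsup p q N c k).natDegree ≤ 2 * N + 6 := by
    rw [Qsup]
    apply Polynomial.natDegree_sum_le_of_forall_le
    intro j hj
    rw [Finset.mem_Icc] at hj
    refine le_trans (Polynomial.natDegree_mul_le) ?_
    rw [Polynomial.natDegree_C, zero_add, Polynomial.natDegree_X_pow]
    omega
  simp only [Qmat, Matrix.of_apply]
  by_cases h1 : l = k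
  · rw [if_pos h1]; exact hdiag
  · rw [if_neg h1]
    by_cases h2 : l = k - 1
    · rw [if_pos h2]; exact hsub
    · rw [if_neg h2]
      by_cases h3 : l = k + 1
      · rw [if_pos h3]; exact hsup
      · rw [if_neg h3]; simp

lemma Qdet_deg (p : ℕ) [NeZero p] (q : ℂ) (T : Polynomial ℂ) (N : ℕ) (c : ℤ → ℂ) :
    ((Qmat p q T N c).det).natDegree ≤ p * (2 * N + 6) := by
  rw [Matrix.det_apply']
  apply Polynomial.natDegree_sum_le_of_forall_le
  intro σ _
  refine le_trans (Polynomial.natDegree_mul_le) ?_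
  rw [Polynomial.natDegree_intCast, zero_add]
  refine le_trans (Polynomial.natDegree_prod_le _ _) ?_
  calc ∑ i : ZMod p, (Qmat p q T N c (σ i) i).natDegree
      ≤ ∑ _i : ZMod p, (2 * N + 6) :=
        Finset.sum_le_sum (fun i _ => Qmat_deg p q T N c (σ i) i)
    _ = p * (2 * N + 6) := by
        rw [Finset.sum_const, Finset.card_univ, ZMod.card, smul_eq_mul]

lemma coeff_sum_CX (f : ℕ → ℂ) (m n : ℕ) :
    (∑ i ∈ Finset.range m, C (f i) * X ^ i).coeff n = if n < m then f n else 0 := by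
  rw [finset_sum_coeff]
  by_cases h : n < m
  · rw [if_pos h, Finset.sum_eq_single n]
    · simp
    · intro b _ hb; simp [coeff_C_mul, coeff_X_pow, Ne.symm hb]
    · intro hn; exact absurd (Finset.mem_range.2 h) hn
  · rw [if_neg h]
    apply Finset.sum_eq_zero
    intro b hb
    rw [Finset.mem_range] at hb
    simp [coeff_C_mul, coeff_X_pow, show n ≠ b by omega]

lemma coeff_zero_of_shift (ζ : ℂ) (p : ℕ) (hζ : IsPrimitiveRoot ζ p) (A : Polynomial ℂ)
    (hsh : ∀ z : ℂ, A.eval (ζ * z) = A.eval z) : ∀ n, ¬ (p ∣ n) → A.coeff n = 0 := by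
  intro n hn
  set B : Polynomial ℂ := ∑ i ∈ Finset.range (A.natDegree + 1), C (A.coeff i * ζ ^ i) * X ^ i
    with hBdef
  have hB : ∀ z : ℂ, B.eval z = A.eval z := by
    intro z
    rw [← hsh z, hBdef, eval_finset_sum]
    rw [Polynomial.eval_eq_sum_range (x := ζ * z)]
    apply Finset.sum_congr rfl
    intro i _
    simp only [eval_mul, eval_pow, eval_C, eval_X]
    rw [mul_pow]
    ring
  have hBA : B = A := Polynomial.funext hB
  rcases lt_or_ge n (A.natDegree + 1) with h | h
  · have h1 : B.coeff n = A.coeff n * ζ ^ n := by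
      rw [hBdef, coeff_sum_CX, if_pos h]
    rw [hBA] at h1
    have h2 : A.coeff n * (ζ ^ n - 1) = 0 := by linear_combination -h1
    rcases mul_eq_zero.1 h2 with h3 | h3
    · exact h3
    · exfalso
      apply hn
      rw [← hζ.pow_eq_one_iff_dvd]
      linear_combination h3
  · exact Polynomial.coeff_eq_zero_of_natDegree_lt (by omega)

lemma exists_comp_pow (p : ℕ) (hp : p ≠ 0) (A : Polynomial ℂ) (d : ℕ)
    (hdeg : A.natDegree ≤ p * d) (hcoeff : ∀ n, ¬ p ∣ n → A.coeff n = 0) :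
    ∃ Cp : Polynomial ℂ, Cp.natDegree ≤ d ∧ ∀ z : ℂ, A.eval z = Cp.eval (z ^ p) := by
  refine ⟨∑ i ∈ Finset.range (d + 1), C (A.coeff (p * i)) * X ^ i, ?_, ?_⟩
  · apply Polynomial.natDegree_sum_le_of_forall_le
    intro i hi
    rw [Finset.mem_range] at hi
    refine le_trans (Polynomial.natDegree_mul_le) ?_
    rw [Polynomial.natDegree_C, zero_add, Polynomial.natDegree_X_pow]
    omega
  · intro z
    rw [eval_finset_sum]
    rw [Polynomial.eval_eq_sum_range' (show A.natDegree < p * d + 1 by omega) z]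
    have hsub : (Finset.range (d + 1)).image (fun i => p * i) ⊆ Finset.range (p * d + 1) := by
      intro n hn
      simp only [Finset.mem_image, Finset.mem_range] at hn ⊢
      obtain ⟨i, hi, rfl⟩ := hn
      have : p * i ≤ p * d := Nat.mul_le_mul_left p (by omega)
      omega
    rw [← Finset.sum_subset hsub ?_]
    · rw [Finset.sum_image (fun i _ j _ h => Nat.eq_of_mul_eq_mul_left (by omega) h)]
      apply Finset.sum_congr rfl
      intro i _
      simp only [eval_mul, eval_pow, eval_C, eval_X]
      rw [pow_mul]
    · intro n hn hni
      rw [Finset.mem_range] at hn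
      have hnd : ¬ p ∣ n := by
        intro hdvd
        obtain ⟨i, rfl⟩ := hdvd
        apply hni
        simp only [Finset.mem_image, Finset.mem_range]
        have hid : i < d + 1 := by
          by_contra hid
          have h5 : p * (d + 1) ≤ p * i := Nat.mul_le_mul_left p (by omega)
          have h6 : p * (d + 1) = p * d + p := by ring
          omega
        exact ⟨i, hid, rfl⟩
      rw [hcoeff n hnd, zero_mul]

lemma factor_pm1 (Cp : Polynomial ℂ) (h1 : Cp.eval 1 = 0) (h2 : Cp.eval (-1) = 0) :
    ∃ C₁ : Polynomial ℂ, Cp = (X - C 1) * (X + C 1) * C₁ := by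
  obtain ⟨C0, hC0⟩ := (Polynomial.dvd_iff_isRoot).2 h1
  have h3 : C0.eval (-1) = 0 := by
    rw [hC0] at h2
    simp only [eval_mul, eval_sub, eval_X, eval_C] at h2
    have : (-1 : ℂ) - 1 ≠ 0 := by norm_num
    rcases mul_eq_zero.1 h2 with h | h
    · exact absurd h this
    · exact h
  obtain ⟨C₁, hC₁⟩ := (Polynomial.dvd_iff_isRoot).2 h3
  refine ⟨C₁, ?_⟩
  rw [hC0, hC₁]
  have : (X - C (-1) : Polynomial ℂ) = X + C 1 := by
    rw [map_neg, sub_neg_eq_add]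
  rw [this]
  ring

lemma prod_diag (p : ℕ) [NeZero p] (q : ℂ) (hq : IsPrimitiveRoot q p) (hodd : Odd p)
    (z : ℂ) (hz : z ≠ 0) :
    ∏ k : ZMod p, (uu p q k z - (uu p q k z)⁻¹) = (z ^ (2 * p) - 1) * (z ^ p)⁻¹ := by
  have hp0 : p ≠ 0 := NeZero.ne p
  have hq0 : q ≠ 0 := hq.ne_zero hp0
  have h1 : ∏ k : ZMod p, (uu p q k z - (uu p q k z)⁻¹)
      = ∏ k ∈ Finset.range p, (q ^ (2 * k) * z - (q ^ (2 * k) * z)⁻¹) := by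
    apply Finset.prod_nbij' (fun k : ZMod p => k.val) (fun n : ℕ => (n : ZMod p))
    · intro a _; exact Finset.mem_range.2 (ZMod.val_lt a)
    · intro b _; exact Finset.mem_univ _
    · intro a _; exact ZMod.natCast_zmod_val a
    · intro b hb; exact ZMod.val_cast_of_lt (Finset.mem_range.1 hb)
    · intro a _; rfl
  rw [h1]
  have h2 : ∀ k ∈ Finset.range p, q ^ (2 * k) * z - (q ^ (2 * k) * z)⁻¹
      = (q ^ (2 * k) * z⁻¹) * (z ^ 2 - ((q ^ 4)⁻¹) ^ k) := by
    intro k _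
    have hqk : (q : ℂ) ^ (2 * k) ≠ 0 := pow_ne_zero _ hq0
    have e1 : ((q ^ 4 : ℂ)⁻¹) ^ k = ((q ^ (2 * k)) ^ 2)⁻¹ := by
      rw [← pow_mul, ← inv_pow, ← pow_mul]
      congr 1
      ring
    rw [e1, mul_inv]
    field_simp
  rw [Finset.prod_congr rfl h2, Finset.prod_mul_distrib]
  have h3 : ∏ k ∈ Finset.range p, (q ^ (2 * k) * z⁻¹) = 1 * (z⁻¹) ^ p := by
    rw [Finset.prod_mul_distrib, Finset.prod_const, Finset.card_range]
    congr 1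
    rw [Finset.prod_pow_eq_pow_sum]
    have hsum : ∑ k ∈ Finset.range p, 2 * k = p * (p - 1) := by
      rw [← Finset.mul_sum]
      have := Finset.sum_range_id_mul_two p
      omega
    rw [hsum, pow_mul, hq.pow_eq_one, one_pow]
  have hq4 : IsPrimitiveRoot ((q ^ 4)⁻¹) p := by
    apply IsPrimitiveRoot.inv
    apply hq.pow_of_coprime
    have h2p : Nat.Coprime 2 p := (Nat.coprime_two_left).2 hodd
    have : (4 : ℕ) = 2 * 2 := by norm_num
    rw [this]
    exact Nat.Coprime.mul h2p h2p
  have h4 : ∏ k ∈ Finset.range p, (z ^ 2 - ((q ^ 4)⁻¹) ^ k) = (z ^ 2) ^ p - 1 := by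
    have h5 := congrArg (Polynomial.eval (z ^ 2))
      (X_pow_sub_C_eq_prod hq4 (Nat.pos_of_ne_zero hp0) (one_pow p))
    simp only [eval_sub, eval_pow, eval_X, eval_C, eval_prod, mul_one] at h5
    exact h5.symm
  rw [h3, h4, one_mul, inv_pow, ← pow_mul]
  ring


/-- The `p×p` matrix `D_τ(λ)`, indexed by `ℤ/pℤ`, with entries
`(D_τ(λ))_{k,k} = τ(q^k λ)`, `(D_τ(λ))_{k,k−1} = −a(q^k λ)`,
`(D_τ(λ))_{k,k+1} = −a(1/(q^k λ))`, all other entries zero. -/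
noncomputable def Dmat (p : ℕ) (q : ℂ) (tau a : ℂ → ℂ) (lam : ℂ) :
    Matrix (ZMod p) (ZMod p) ℂ :=
  Matrix.of fun k l : ZMod p =>
    if l = k then tau (q ^ k.val * lam)
    else if l = k - 1 then -a (q ^ k.val * lam)
    else if l = k + 1 then -a ((q ^ k.val * lam)⁻¹)
    else 0

lemma zpow_two_mul (x : ℂ) (j : ℤ) : x ^ (2 * j) = (x ^ 2) ^ j := by
  rw [zpow_mul]
  norm_cast

lemma Mmat_eq_diag_mul_D (p : ℕ) [NeZero p] (q : ℂ) (T : Polynomial ℂ) (N : ℕ) (c : ℤ → ℂ)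
    (tau a : ℂ → ℂ) (hq0 : q ≠ 0)
    (htau : ∀ lam : ℂ, lam ≠ 0 → tau lam = T.eval (lam ^ 2 + (lam ^ 2)⁻¹))
    (ha : ∀ lam : ℂ, lam ≠ 0 → lam ^ 4 ≠ 1 →
      a lam = (∑ j ∈ Finset.Icc (-(N + 2 : ℤ)) (N + 2 : ℤ), c j * lam ^ (2 * j)) /
        (lam ^ 2 - (lam ^ 2)⁻¹))
    (lam : ℂ) (hlam : lam ≠ 0) (hpow : ∀ k : ℕ, k < p → (q ^ k * lam) ^ 4 ≠ 1) :
    Mmat p q T N c (lam ^ 2) =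
      Matrix.diagonal (fun k => uu p q k (lam ^ 2) - (uu p q k (lam ^ 2))⁻¹) *
        Dmat p q tau a lam := by
  ext k l
  rw [Matrix.diagonal_mul]
  set μ : ℂ := q ^ k.val * lam with hμ
  have hμ0 : μ ≠ 0 := mul_ne_zero (pow_ne_zero _ hq0) hlam
  have hμ4 : μ ^ 4 ≠ 1 := hpow k.val (ZMod.val_lt k)
  have hu : μ ^ 2 = uu p q k (lam ^ 2) := by
    rw [hμ, mul_pow, uu, ← pow_mul, mul_comm k.val 2]
  set u : ℂ := uu p q k (lam ^ 2) with hudef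
  have hu0 : u ≠ 0 := by
    rw [← hu]; exact pow_ne_zero _ hμ0
  have hu21 : u ^ 2 ≠ 1 := by
    have h4 : μ ^ (2 * 2) = μ ^ 4 := by norm_num
    rw [← hu, ← pow_mul, h4]
    exact hμ4
  have hune : u - u⁻¹ ≠ 0 := by
    intro h
    apply hu21
    have h1 : u = u⁻¹ := sub_eq_zero.mp h
    rw [pow_two]
    nth_rewrite 2 [h1]
    exact mul_inv_cancel₀ hu0
  simp only [Mmat, Dmat, Matrix.of_apply]
  by_cases h1 : l = k
  · rw [if_pos h1, if_pos h1, htau μ hμ0, hu]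
    rfl
  · rw [if_neg h1, if_neg h1]
    by_cases h2 : l = k - 1
    · rw [if_pos h2, if_pos h2, ha μ hμ0 hμ4, hu]
      have hnum : ∑ j ∈ Finset.Icc (-(N + 2 : ℤ)) (N + 2 : ℤ), c j * μ ^ (2 * j)
          = xxf N c u := by
        rw [xxf]
        apply Finset.sum_congr rfl
        intro j _
        rw [zpow_two_mul, hu]
      rw [hnum, mul_neg, mul_div_cancel₀ _ hune]
    · rw [if_neg h2, if_neg h2]
      by_cases h3 : l = k + 1
      · have hμi0 : μ⁻¹ ≠ 0 := inv_ne_zero hμ0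
        have hμi4 : (μ⁻¹) ^ 4 ≠ 1 := by
          rw [inv_pow]
          exact fun h => hμ4 (inv_eq_one.mp h)
        have hiu : (μ⁻¹) ^ 2 = u⁻¹ := by rw [inv_pow, hu]
        rw [if_pos h3, if_pos h3, ha μ⁻¹ hμi0 hμi4, hiu, inv_inv]
        have hnum : ∑ j ∈ Finset.Icc (-(N + 2 : ℤ)) (N + 2 : ℤ), c j * (μ⁻¹) ^ (2 * j)
            = xxf N c u⁻¹ := by
          rw [xxf]
          apply Finset.sum_congr rfl
          intro j _
          rw [zpow_two_mul, hiu]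
        rw [hnum]
        have hne : u⁻¹ - u = -(u - u⁻¹) := by ring
        rw [hne, div_neg, mul_neg, mul_neg, neg_neg, mul_div_cancel₀ _ hune]
      · rw [if_neg h3, if_neg h3, mul_zero]

/-- If `τ(λ) = T(λ² + λ⁻²)` for a polynomial `T` of degree `≤ N+2`,
and `a(λ) = x(λ)/(λ² − λ⁻²)` (for `λ⁴ ≠ 1`) with `x` an even Laurent polynomial of
degree `≤ 2N+4`, then there is a polynomial `P` of degree `≤ N+2` with
`det D_τ(λ) = P(λ^{2p} + λ^{−2p})` for every nonzero `λ` with `(q^k λ)⁴ ≠ 1` for all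
`k < p`. -/
theorem stmt_2 (p : ℕ) [NeZero p] (hodd : Odd p) (hp3 : 3 ≤ p)
    (q : ℂ) (hq : IsPrimitiveRoot q p)
    (N : ℕ) (tau a : ℂ → ℂ)
    (T : Polynomial ℂ) (hT : T.natDegree ≤ N + 2)
    (htau : ∀ lam : ℂ, lam ≠ 0 → tau lam = T.eval (lam ^ 2 + (lam ^ 2)⁻¹))
    (c : ℤ → ℂ)
    (ha : ∀ lam : ℂ, lam ≠ 0 → lam ^ 4 ≠ 1 →
      a lam = (∑ j ∈ Finset.Icc (-(N + 2 : ℤ)) (N + 2 : ℤ), c j * lam ^ (2 * j)) /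
        (lam ^ 2 - (lam ^ 2)⁻¹)) :
    ∃ P : Polynomial ℂ, P.natDegree ≤ N + 2 ∧
      ∀ lam : ℂ, lam ≠ 0 → (∀ k : ℕ, k < p → (q ^ k * lam) ^ 4 ≠ 1) →
        (Dmat p q tau a lam).det = P.eval (lam ^ (2 * p) + (lam ^ (2 * p))⁻¹) := by
  have hp0 : p ≠ 0 := NeZero.ne p
  have hp1 : 1 < p := by omega
  have hq1 : q ^ p = 1 := hq.pow_eq_one
  have hq0 : q ≠ 0 := hq.ne_zero hp0
  have h2Z : (2 : ZMod p) ≠ 0 := by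
    intro h
    have h22 : ((2 : ℕ) : ZMod p) = 0 := by exact_mod_cast h
    have hdvd := (ZMod.natCast_eq_zero_iff 2 p).1 h22
    have := Nat.le_of_dvd (by norm_num) hdvd
    omega
  set A : Polynomial ℂ := (Qmat p q T N c).det with hAdef
  have hAdeg : A.natDegree ≤ p * (2 * N + 6) := Qdet_deg p q T N c
  have hAeval : ∀ z : ℂ, z ≠ 0 → A.eval z = (z ^ (N + 3)) ^ p * (Mmat p q T N c z).det :=
    fun z hz => Qdet_eval p q T N c hT hq0 z hz
  have hAshift : ∀ z : ℂ, A.eval (q ^ 2 * z) = A.eval z := by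
    intro z
    by_cases hz : z = 0
    · rw [hz, mul_zero]
    · rw [hAeval _ (mul_ne_zero (pow_ne_zero 2 hq0) hz), hAeval z hz,
        Mmat_det_shift p q T N c hq1 hp1 z]
      congr 1
      rw [mul_pow, mul_pow]
      have he : ((q ^ 2) ^ (N + 3)) ^ p = (q ^ p) ^ (2 * (N + 3)) := by
        rw [← pow_mul, ← pow_mul, ← pow_mul]
        congr 1
        ring
      rw [he, hq1, one_pow, one_mul]
  have hq2prim : IsPrimitiveRoot (q ^ 2) p := hq.pow_of_coprime 2 (Nat.coprime_two_left.2 hodd)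
  have hAcoeff := coeff_zero_of_shift (q ^ 2) p hq2prim A hAshift
  obtain ⟨Cp, hCdeg, hCeval⟩ := exists_comp_pow p hp0 A (2 * N + 6) hAdeg hAcoeff
  have hroot : ∀ z : ℂ, z ^ (2 * p) = 1 → A.eval z = 0 := by
    intro z hz
    have hz0 : z ≠ 0 := by
      intro h
      rw [h, zero_pow (show 2 * p ≠ 0 by omega)] at hz
      exact zero_ne_one hz
    rw [hAeval z hz0, Mdet_root_zero p q T N c hq hodd hp1 h2Z z hz, mul_zero]
  have hC1 : Cp.eval 1 = 0 := by
    have h := hCeval 1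
    rw [one_pow] at h
    rw [← h]
    exact hroot 1 (one_pow _)
  have hCm1 : Cp.eval (-1) = 0 := by
    have h := hCeval (-1)
    rw [Odd.neg_one_pow hodd] at h
    rw [← h]
    apply hroot
    rw [pow_mul]
    norm_num
  have hCsym : ∀ w : ℂ, w ≠ 0 → Cp.eval w = -(w ^ (2 * N + 6) * Cp.eval w⁻¹) := by
    intro w hw
    obtain ⟨z, hzw⟩ := IsAlgClosed.exists_pow_nat_eq w (show 0 < p by omega)
    have hz0 : z ≠ 0 := by
      intro h
      rw [h, zero_pow hp0] at hzw
      exact hw hzw.symm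
    have hzi : (z⁻¹) ^ p = w⁻¹ := by rw [inv_pow, hzw]
    have e1 : Cp.eval w = (z ^ (N + 3)) ^ p * (Mmat p q T N c z).det := by
      rw [← hzw, ← hCeval z, hAeval z hz0]
    have e2 : Cp.eval w⁻¹ = ((z ^ (N + 3)) ^ p)⁻¹ * -(Mmat p q T N c z).det := by
      rw [← hzi, ← hCeval z⁻¹, hAeval z⁻¹ (inv_ne_zero hz0),
        Mmat_det_invz p q T N c hq1 hodd h2Z z]
      congr 1
      rw [inv_pow, inv_pow]
    have e3 : w ^ (2 * N + 6) = ((z ^ (N + 3)) ^ p) ^ 2 := by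
      rw [← hzw, ← pow_mul, ← pow_mul, ← pow_mul]
      congr 1
      ring
    rw [e1, e2, e3]
    have hzp0 : (z ^ (N + 3)) ^ p ≠ 0 := pow_ne_zero _ (pow_ne_zero _ hz0)
    field_simp
  obtain ⟨C₁, hC₁⟩ := factor_pm1 Cp hC1 hCm1
  have hC₁' : Cp = (X ^ 2 - C 1) * C₁ := by
    rw [hC₁, show (C (1:ℂ)) = 1 from map_one C]
    ring
  have hC₁deg : C₁.natDegree ≤ 2 * N + 4 := by
    by_cases h : C₁ = 0
    · rw [h]; simp
    · have hX2 : (X ^ 2 - C (1:ℂ)).natDegree = 2 := Polynomial.natDegree_X_pow_sub_C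
      have h1 : Cp.natDegree = 2 + C₁.natDegree := by
        rw [hC₁', Polynomial.natDegree_mul
          (Polynomial.monic_X_pow_sub_C (1:ℂ) (by norm_num)).ne_zero h, hX2]
      omega
  have hC₁sym0 : ∀ w : ℂ, w ≠ 0 → w ≠ 1 → w ≠ -1 →
      C₁.eval w = w ^ (2 * N + 4) * C₁.eval w⁻¹ := by
    intro w h0 h1 hm1
    have hfac : (w ^ 2 - 1 : ℂ) ≠ 0 := by
      intro h
      have h' : (w - 1) * (w + 1) = 0 := by linear_combination h
      rcases mul_eq_zero.1 h' with h'' | h''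
      · exact h1 (by linear_combination h'')
      · exact hm1 (by linear_combination h'')
    have hsym := hCsym w h0
    rw [hC₁'] at hsym
    simp only [eval_mul, eval_sub, eval_pow, eval_X, eval_C, eval_one] at hsym
    apply mul_left_cancel₀ hfac
    rw [hsym]
    have hw2 : w ^ (2 * N + 6) = w ^ (2 * N + 4) * w ^ 2 := by
      rw [← pow_add]
    have hinv : (w⁻¹ : ℂ) ^ 2 = (w ^ 2)⁻¹ := inv_pow w 2
    rw [hw2, hinv]
    field_simp
    ring
  have hSinf : ({w : ℂ | w ≠ 0 ∧ w ≠ 1 ∧ w ≠ -1}).Infinite := by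
    have hfin : ({0, 1, -1} : Set ℂ).Finite :=
      ((Set.finite_singleton (-1 : ℂ)).insert 1).insert 0
    apply Set.Infinite.mono _ hfin.infinite_compl
    intro w hw
    simp only [Set.mem_compl_iff, Set.mem_insert_iff, Set.mem_singleton_iff] at hw
    push_neg at hw
    exact hw
  have hmirC := mir_eq (2 * N + 4) C₁ hC₁deg _ hSinf (fun w hw => hw.1)
    (fun w hw => hC₁sym0 w hw.1 hw.2.1 hw.2.2)
  have hC₁sym : ∀ w : ℂ, w ≠ 0 → C₁.eval w = w ^ (2 * N + 4) * C₁.eval w⁻¹ := by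
    intro w hw
    conv_lhs => rw [← hmirC]
    exact mir_eval _ _ hC₁deg w hw
  obtain ⟨P, hPdeg, hP⟩ := pal (N + 2) C₁ (by omega)
    (by intro w hw; have := hC₁sym w hw; rwa [show 2 * N + 4 = 2 * (N + 2) by ring] at this)
  refine ⟨P, hPdeg, ?_⟩
  intro lam hlam hpow
  have hz0 : (lam ^ 2 : ℂ) ≠ 0 := pow_ne_zero _ hlam
  set z : ℂ := lam ^ 2 with hzdef
  set w : ℂ := lam ^ (2 * p) with hwdef
  have hw0 : w ≠ 0 := pow_ne_zero _ hlam
  have hzw : z ^ p = w := (pow_mul lam 2 p).symm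
  have cop2 : Nat.Coprime 2 p := Nat.coprime_two_left.2 hodd
  have hq4prim : IsPrimitiveRoot (q ^ 4) p := by
    apply hq.pow_of_coprime
    rw [show (4 : ℕ) = 2 * 2 by norm_num]
    exact Nat.Coprime.mul cop2 cop2
  have hw2 : w ^ 2 ≠ 1 := by
    intro hcontr
    have h4p : ((lam ^ 4)⁻¹) ^ p = 1 := by
      rw [inv_pow]
      have he : (lam ^ 4) ^ p = w ^ 2 := by
        rw [hwdef, ← pow_mul, ← pow_mul]
        congr 1
        ring
      rw [he, hcontr, inv_one]
    obtain ⟨m, hm, hqm⟩ := hq4prim.eq_pow_of_pow_eq_one h4p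
    apply hpow m hm
    rw [mul_pow]
    have he2 : (q ^ m) ^ 4 = (q ^ 4) ^ m := by
      rw [← pow_mul, ← pow_mul]
      congr 1
      ring
    rw [he2, hqm]
    exact inv_mul_cancel₀ (pow_ne_zero _ hlam)
  have hwm1 : (w ^ 2 - 1 : ℂ) ≠ 0 := fun h => hw2 (by linear_combination h)
  have hlink := Mmat_eq_diag_mul_D p q T N c tau a hq0 htau ha lam hlam hpow
  have hdetM : (Mmat p q T N c z).det =
      ((z ^ (2 * p) - 1) * (z ^ p)⁻¹) * (Dmat p q tau a lam).det := by
    rw [hzdef, hlink, Matrix.det_mul, Matrix.det_diagonal,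
      prod_diag p q hq hodd (lam ^ 2) hz0]
  have hz2p : z ^ (2 * p) = w ^ 2 := by
    conv_rhs => rw [← hzw, ← pow_mul]
    rw [mul_comm p 2]
  have hzNp : (z ^ (N + 3)) ^ p = w ^ (N + 3) := by
    conv_rhs => rw [← hzw, ← pow_mul]
    rw [← pow_mul, mul_comm (N + 3) p]
  have hcanc : (w ^ (N + 2) * (w ^ 2 - 1) : ℂ) ≠ 0 := mul_ne_zero (pow_ne_zero _ hw0) hwm1
  apply mul_left_cancel₀ hcanc
  have hww : w ^ (N + 3) * w⁻¹ = w ^ (N + 2) := by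
    rw [pow_succ, mul_assoc, mul_inv_cancel₀ hw0, mul_one]
  calc (w ^ (N + 2) * (w ^ 2 - 1)) * (Dmat p q tau a lam).det
      = (z ^ (N + 3)) ^ p * (Mmat p q T N c z).det := by
        rw [hdetM, hz2p, hzw, hzNp, ← hww]
        ring
    _ = A.eval z := (hAeval z hz0).symm
    _ = Cp.eval w := by rw [hCeval z, hzw]
    _ = (w ^ 2 - 1) * C₁.eval w := by
        rw [hC₁']
        simp only [eval_mul, eval_sub, eval_pow, eval_X, eval_C]
    _ = (w ^ 2 - 1) * (w ^ (N + 2) * P.eval (w + w⁻¹)) := by rw [hP w hw0]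
    _ = (w ^ (N + 2) * (w ^ 2 - 1)) * P.eval (w + w⁻¹) := by ring
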